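/- Let d be a power of 2, H the d×d orthonormal Walsh–Hadamard matrix, D' a random diagonal matrix with i.i.d. ±1 diagonal entries, and x = d^{−1/2}(1,1,…,1)^T. Then with t = d^{1/4}, P(‖H D' x‖₄ ≥ t·d^{−1/4}) ≥ 2^{−d} ≥ e^{−t⁴}. In particular, the tail bound P(‖HD'x‖₄ ≥ t d^{−1/4}) ≤ e^{1−c t⁴} is sharp up to constants. -/

import Mathlib

open Real Finset

/-- The sign `±1` associated to a Boolean. -/
def sgn (b : Bool) : ℝ := if b then 1 else -1

/-- The `d × d` orthonormal Walsh–Hadamard matrix for `d = 2^n`. -/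
noncomputable def WH (n : ℕ) : Matrix (Fin (2 ^ n)) (Fin (2 ^ n)) ℝ := fun i j =>
  (Real.sqrt (2 ^ n))⁻¹ *
    (-1 : ℝ) ^ (∑ b ∈ Finset.range n, ((i : ℕ).testBit b).toNat * ((j : ℕ).testBit b).toNat)

lemma charSum (i n : ℕ) :
    ∑ j ∈ range (2^n), (-1:ℝ) ^ (∑ b ∈ range n, (i.testBit b).toNat * (j.testBit b).toNat)
    = ∏ b ∈ range n, (1 + (-1:ℝ) ^ (i.testBit b).toNat) := by
  induction n with
  | zero => simp
  | succ n ih =>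
    have h2 : 2 ^ (n+1) = 2 ^ n + 2 ^ n := by ring
    rw [h2, Finset.sum_range_add, Finset.prod_range_succ, ← ih]
    have key : ∀ j ∈ range (2^n), (-1:ℝ) ^ (∑ b ∈ range (n+1), (i.testBit b).toNat * ((2^n + j).testBit b).toNat)
        = (-1:ℝ) ^ (∑ b ∈ range n, (i.testBit b).toNat * (j.testBit b).toNat) * (-1:ℝ) ^ (i.testBit n).toNat := by
      intro j hj
      rw [Finset.sum_range_succ, pow_add]
      congr 2
      · exact Finset.sum_congr rfl fun b hb => by
          rw [Nat.testBit_two_pow_add_gt (Finset.mem_range.mp hb)]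
      · rw [Nat.testBit_two_pow_add_eq, Nat.testBit_lt_two_pow (Finset.mem_range.mp hj)]
        simp
    have key2 : ∀ j ∈ range (2^n), (-1:ℝ) ^ (∑ b ∈ range (n+1), (i.testBit b).toNat * (j.testBit b).toNat)
        = (-1:ℝ) ^ (∑ b ∈ range n, (i.testBit b).toNat * (j.testBit b).toNat) := by
      intro j hj
      rw [Finset.sum_range_succ, Nat.testBit_lt_two_pow (Finset.mem_range.mp hj)]
      simp
    rw [Finset.sum_congr rfl key2, Finset.sum_congr rfl key, ← Finset.sum_mul]
    ring

lemma charSum_zero (n : ℕ) :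
    ∑ j ∈ range (2^n), (-1:ℝ) ^ (∑ b ∈ range n, (Nat.testBit 0 b).toNat * (j.testBit b).toNat)
    = 2 ^ n := by
  rw [charSum]; norm_num

lemma charSum_ne (i n : ℕ) (hi : i < 2 ^ n) (hne : i ≠ 0) :
    ∑ j ∈ range (2^n), (-1:ℝ) ^ (∑ b ∈ range n, (i.testBit b).toNat * (j.testBit b).toNat)
    = 0 := by
  rw [charSum]
  obtain ⟨b, hb⟩ := Nat.exists_testBit_of_ne_zero hne
  have hbn : b < n := by
    by_contra hc
    have : i < 2 ^ b := lt_of_lt_of_le hi (Nat.pow_le_pow_right (by norm_num) (not_lt.mp hc))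
    rw [Nat.testBit_lt_two_pow this] at hb
    exact Bool.false_ne_true hb
  exact Finset.prod_eq_zero (Finset.mem_range.mpr hbn) (by rw [hb]; norm_num)

/-- sharpness example: for `x = d^{-1/2}(1,…,1)` and `t = d^{1/4}`,
`P(‖H D' x‖₄ ≥ t d^{-1/4}) ≥ 2^{-d} ≥ e^{-t⁴}`. -/
theorem flattening_tail_sharp (n : ℕ) :
    ((Finset.univ.filter fun ε : Fin (2 ^ n) → Bool =>
        ((2 ^ n : ℝ)) ^ ((1 : ℝ) / 4) * ((2 ^ n : ℝ)) ^ (-(1 : ℝ) / 4)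
          ≤ (∑ i, ((WH n).mulVec
              (fun j => sgn (ε j) * (Real.sqrt (2 ^ n))⁻¹) i) ^ 4) ^ ((1 : ℝ) / 4)).card : ℝ)
        / 2 ^ (2 ^ n) ≥ ((2 : ℝ) ^ (2 ^ n))⁻¹ ∧
    ((2 : ℝ) ^ (2 ^ n))⁻¹ ≥ Real.exp (-(((2 ^ n : ℝ)) ^ ((1 : ℝ) / 4)) ^ 4) := by
  haveI : NeZero (2 ^ n) := ⟨pow_ne_zero _ two_ne_zero⟩
  have hdpos : (0:ℝ) < 2 ^ n := by positivity
  have hsq : (Real.sqrt (2 ^ n))⁻¹ * (Real.sqrt (2 ^ n))⁻¹ = ((2:ℝ) ^ n)⁻¹ := by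
    rw [← mul_inv, Real.mul_self_sqrt hdpos.le]
  constructor
  · -- the all-true sign vector witnesses the event
    have hval : ∀ i : Fin (2 ^ n),
        (WH n).mulVec (fun j => sgn true * (Real.sqrt (2 ^ n))⁻¹) i
        = if i = 0 then 1 else 0 := by
      intro i
      have : (WH n).mulVec (fun j => sgn true * (Real.sqrt (2 ^ n))⁻¹) i
          = (Real.sqrt (2 ^ n))⁻¹ * (Real.sqrt (2 ^ n))⁻¹ *
            ∑ j ∈ range (2 ^ n), (-1:ℝ) ^
              (∑ b ∈ range n, ((i:ℕ).testBit b).toNat * (Nat.testBit j b).toNat) := by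
        rw [Matrix.mulVec, ← Fin.sum_univ_eq_sum_range
          (fun j => (-1:ℝ) ^ (∑ b ∈ range n, ((i:ℕ).testBit b).toNat * (Nat.testBit j b).toNat)),
          Finset.mul_sum]
        simp only [dotProduct, WH, sgn, if_true, one_mul]
        exact Finset.sum_congr rfl fun j _ => by ring
      rw [this]
      by_cases hi : i = 0
      · subst hi
        simp only [Fin.val_zero] at *
        rw [charSum_zero, hsq]
        simp [inv_mul_cancel₀ hdpos.ne']
      · rw [charSum_ne (i:ℕ) n i.isLt (fun h => hi (Fin.ext h)), if_neg hi, mul_zero]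
    have hsum : (∑ i, ((WH n).mulVec
        (fun j => sgn ((fun _ : Fin (2^n) => true) j) * (Real.sqrt (2 ^ n))⁻¹) i) ^ 4) = 1 := by
      have hterm : ∀ i : Fin (2^n), (if i = 0 then (1:ℝ) else 0) ^ 4
          = if i = 0 then 1 else 0 := fun i => by by_cases hi : i = 0 <;> simp [hi]
      simp only [hval, hterm]
      rw [Finset.sum_ite_eq' Finset.univ (0 : Fin (2^n)) (fun _ => (1:ℝ))]
      simp
    have hmem : (fun _ : Fin (2^n) => true) ∈ Finset.univ.filter
        fun ε : Fin (2 ^ n) → Bool =>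
        ((2 ^ n : ℝ)) ^ ((1 : ℝ) / 4) * ((2 ^ n : ℝ)) ^ (-(1 : ℝ) / 4)
          ≤ (∑ i, ((WH n).mulVec
              (fun j => sgn (ε j) * (Real.sqrt (2 ^ n))⁻¹) i) ^ 4) ^ ((1 : ℝ) / 4) := by
      rw [Finset.mem_filter]
      refine ⟨Finset.mem_univ _, ?_⟩
      rw [hsum, Real.one_rpow, ← Real.rpow_add hdpos]
      norm_num
    have hcard : (1:ℝ) ≤ ((Finset.univ.filter fun ε : Fin (2 ^ n) → Bool =>
        ((2 ^ n : ℝ)) ^ ((1 : ℝ) / 4) * ((2 ^ n : ℝ)) ^ (-(1 : ℝ) / 4)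
          ≤ (∑ i, ((WH n).mulVec
              (fun j => sgn (ε j) * (Real.sqrt (2 ^ n))⁻¹) i) ^ 4) ^ ((1 : ℝ) / 4)).card : ℝ) := by
      have := Finset.card_pos.mpr ⟨_, hmem⟩
      exact_mod_cast this
    rw [ge_iff_le, inv_eq_one_div]
    gcongr
  · -- 2^{-d} ≥ e^{-t⁴} with t⁴ = d
    have h4 : ((((2:ℝ) ^ n)) ^ ((1 : ℝ) / 4)) ^ 4 = (2:ℝ) ^ n := by
      rw [← Real.rpow_natCast ((((2:ℝ) ^ n)) ^ ((1 : ℝ) / 4)) 4,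
        ← Real.rpow_mul hdpos.le]
      norm_num
    rw [ge_iff_le, h4, Real.exp_neg]
    apply inv_anti₀ (by positivity)
    calc (2:ℝ) ^ (2^n) ≤ (Real.exp 1) ^ (2^n) := by
          apply pow_le_pow_left₀ (by norm_num)
          linarith [Real.add_one_le_exp (1:ℝ)]
      _ = Real.exp ((2:ℕ)^n : ℕ) := Real.exp_one_pow _
      _ = Real.exp ((2:ℝ)^n) := by push_cast; ring_nf
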